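/- Let A ∈ R^{m×n} satisfy the sNSP of order s, let x be s-sparse with support S, A x = b, b ≠ 0, and let v ∈ ker(A) with ‖v‖₂ = 1. Then for t > 0, with σ_t(v) = ∑_{i∈S} v_i sign(x_i) + ‖v_{S̄}‖₁, one has σ_t(v)·‖x‖₂² − ⟨v_S, x⟩·‖x‖₁ ≥ 0. -/
import Mathlib


open Finset

theorem stmt18 (m n s : ℕ) (A : Matrix (Fin m) (Fin n) ℝ)
    (hsNSP : ∀ v : Fin n → ℝ, v ≠ 0 → A.mulVec v = 0 →
      ∀ S : Finset (Fin n), S.card ≤ s →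
        ((s : ℝ) + 1) * (∑ i ∈ S, |v i|) ≤ ∑ i ∈ Sᶜ, |v i|)
    (x v : Fin n → ℝ) (b : Fin m → ℝ)
    (hx : (Finset.univ.filter fun i => x i ≠ 0).card ≤ s)
    (hxb : A.mulVec x = b) (hb : b ≠ 0)
    (hvker : A.mulVec v = 0)
    (hv2 : Real.sqrt (∑ i, (v i) ^ 2) = 1)
    (t : ℝ) (ht : 0 < t) :
    let S := Finset.univ.filter fun i => x i ≠ 0
    let σ := (∑ i ∈ S, v i * Real.sign (x i)) + (∑ i ∈ Sᶜ, |v i|)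
    0 ≤ σ * (∑ i, (x i) ^ 2) - (∑ i ∈ S, v i * x i) * (∑ i, |x i|) := by
  intro S σ
  by_cases hv : v = 0
  · simp [σ, hv]
  have hN := hsNSP v hv hvker S hx
  set W : ℝ := ∑ i ∈ S, |v i| with hW
  set Q : ℝ := ∑ i, (x i) ^ 2 with hQ
  set L : ℝ := ∑ i, |x i| with hL
  set P : ℝ := ∑ i ∈ S, v i * x i with hP
  have hW0 : 0 ≤ W := Finset.sum_nonneg fun i _ => abs_nonneg _
  have hQ0 : 0 ≤ Q := Finset.sum_nonneg fun i _ => sq_nonneg _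
  have hL0 : 0 ≤ L := Finset.sum_nonneg fun i _ => abs_nonneg _
  -- σ ≥ s * W
  have hσ : (s : ℝ) * W ≤ σ := by
    have h1 : -W ≤ ∑ i ∈ S, v i * Real.sign (x i) := by
      rw [hW, ← Finset.sum_neg_distrib]
      apply Finset.sum_le_sum
      intro i _
      have h2 : |v i * Real.sign (x i)| ≤ |v i| := by
        rw [abs_mul]
        rcases Real.sign_apply_eq (x i) with h | h | h <;> simp [h]
      nlinarith [neg_abs_le (v i * Real.sign (x i))]
    simp only [σ]
    linarith
  -- L = sum over S
  have hLS : L = ∑ i ∈ S, |x i| := by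
    rw [hL]
    symm
    apply Finset.sum_subset (Finset.subset_univ _)
    intro i _ hiS
    simp only [S, Finset.mem_filter, Finset.mem_univ, true_and, not_not] at hiS
    simp [hiS]
  -- L^2 ≤ s * Q
  have hL2 : L ^ 2 ≤ (s : ℝ) * Q := by
    have h1 : (∑ i ∈ S, |x i|) ^ 2 ≤ (S.card : ℝ) * ∑ i ∈ S, |x i| ^ 2 := by
      exact_mod_cast sq_sum_le_card_mul_sum_sq (s := S) (f := fun i => |x i|)
    have h2 : ∑ i ∈ S, |x i| ^ 2 = ∑ i ∈ S, (x i) ^ 2 := by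
      simp [sq_abs]
    have h3 : ∑ i ∈ S, (x i) ^ 2 ≤ Q :=
      Finset.sum_le_sum_of_subset_of_nonneg (Finset.subset_univ _)
        (fun i _ _ => sq_nonneg _)
    have h4 : (S.card : ℝ) ≤ (s : ℝ) := by exact_mod_cast hx
    have h5 : (0:ℝ) ≤ (S.card : ℝ) := by positivity
    calc L ^ 2 ≤ (S.card : ℝ) * ∑ i ∈ S, |x i| ^ 2 := by rw [hLS]; exact h1
      _ ≤ (s : ℝ) * Q := by
          apply mul_le_mul h4 _ _ (by positivity)
          · rw [h2]; exact h3
          · rw [h2]; exact Finset.sum_nonneg fun i _ => sq_nonneg _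
  -- |P| ≤ W * L
  have hPle : |P| ≤ W * L := by
    calc |P| ≤ ∑ i ∈ S, |v i * x i| := Finset.abs_sum_le_sum_abs _ _
      _ = ∑ i ∈ S, |v i| * |x i| := by simp [abs_mul]
      _ ≤ ∑ i ∈ S, |v i| * L := by
          apply Finset.sum_le_sum
          intro i hi
          apply mul_le_mul_of_nonneg_left _ (abs_nonneg _)
          rw [hL]
          exact Finset.single_le_sum (fun j _ => abs_nonneg (x j)) (Finset.mem_univ i)
      _ = W * L := by rw [hW, Finset.sum_mul]
  have h4 : P * L ≤ W * L * L := by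
    nlinarith [mul_le_mul_of_nonneg_right hPle hL0, le_abs_self P]
  have h5 : W * L ^ 2 ≤ W * ((s : ℝ) * Q) := mul_le_mul_of_nonneg_left hL2 hW0
  have h6 : (s : ℝ) * W * Q ≤ σ * Q := mul_le_mul_of_nonneg_right hσ hQ0
  nlinarith
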